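/- Let G be the concurrent-move game tree associated with a Knapsack instance with unit-items (w_1,…,w_N; v_1,…,v_N; W), i.e., at least W items satisfy w_i = v_i = 1. If a leader behavioral strategy σ1 that plays a pure action in every subgame I_i is optimal (achieves the leader's Stackelberg value in behavioral strategies) and its Stackelberg payoff is strictly positive, then σ1 plays the uniform distribution over l_1,…,l_N at the root. -/

import Mathlib

open scoped BigOperators

noncomputable section

namespace KnapsackGame

/-- A behavioral strategy of the leader in the concurrent-move game tree associated with a
Knapsack instance with `N` items: `q i` is the probability of root action `l_i`, and
`r i` is the probability of action `⊕` in the subgame `I_i`. -/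
structure LStrat (N : ℕ) where
  q : Fin N → ℝ
  r : Fin N → ℝ

/-- A behavioral strategy of the follower: `g 0` is the probability of root action `f_0`,
`g k.succ` the probability of `f_{k+1}`, and `s i` the probability of `L` in subgame `I_i`. -/
structure FStrat (N : ℕ) where
  g : Fin (N + 1) → ℝ
  s : Fin N → ℝ

/-- Validity of a leader behavioral strategy. -/
def LValid {N : ℕ} (σ : LStrat N) : Prop :=
  (∀ i, 0 ≤ σ.q i) ∧ (∑ i, σ.q i) = 1 ∧ ∀ i, 0 ≤ σ.r i ∧ σ.r i ≤ 1

/-- Validity of a follower behavioral strategy. -/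
def FValid {N : ℕ} (τ : FStrat N) : Prop :=
  (∀ k, 0 ≤ τ.g k) ∧ (∑ k, τ.g k) = 1 ∧ ∀ i, 0 ≤ τ.s i ∧ τ.s i ≤ 1

/-- The leader's expected utility in the subgame `I_i`:
`(⊕,L) ↦ N·v i`, `(⊕,R) ↦ 0`, `(⊖,L) ↦ N·v i`, `(⊖,R) ↦ 0`. -/
def subEU1 (N : ℕ) (v : Fin N → ℕ) (σ : LStrat N) (τ : FStrat N) (i : Fin N) : ℝ :=
  σ.r i * (τ.s i * ((N : ℝ) * (v i : ℝ)) + (1 - τ.s i) * 0) +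
    (1 - σ.r i) * (τ.s i * ((N : ℝ) * (v i : ℝ)) + (1 - τ.s i) * 0)

/-- The follower's expected utility in the subgame `I_i`:
`(⊕,L) ↦ -N·w i`, `(⊕,R) ↦ -N·w i`, `(⊖,L) ↦ -N·w i`, `(⊖,R) ↦ 0`. -/
def subEU2 (N : ℕ) (w : Fin N → ℕ) (σ : LStrat N) (τ : FStrat N) (i : Fin N) : ℝ :=
  σ.r i * (τ.s i * (-((N : ℝ) * (w i : ℝ))) + (1 - τ.s i) * (-((N : ℝ) * (w i : ℝ)))) +
    (1 - σ.r i) * (τ.s i * (-((N : ℝ) * (w i : ℝ))) + (1 - τ.s i) * 0)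

/-- The leader's expected utility in the whole game: terminal payoffs after `f_k`, `k ≥ 1`,
give the leader `0`. -/
def EU1 (N : ℕ) (v : Fin N → ℕ) (σ : LStrat N) (τ : FStrat N) : ℝ :=
  τ.g 0 * (∑ i, σ.q i * subEU1 N v σ τ i) +
    ∑ k : Fin N, τ.g k.succ * (∑ i, σ.q i * (0 : ℝ))

/-- The follower's expected utility in the whole game: after root actions `(l_i, f_{k+1})`
the follower gets `N·M − W − M` if `i = k` and `−W − M` otherwise. -/
def EU2 (N : ℕ) (w : Fin N → ℕ) (W M : ℕ) (σ : LStrat N) (τ : FStrat N) : ℝ :=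
  τ.g 0 * (∑ i, σ.q i * subEU2 N w σ τ i) +
    ∑ k : Fin N, τ.g k.succ *
      (∑ i, σ.q i *
        (if i = k then (N : ℝ) * (M : ℝ) - (W : ℝ) - (M : ℝ) else -(W : ℝ) - (M : ℝ)))

/-- `τ` is a best response of the follower to the leader strategy `σ`. -/
def BestResponse (N : ℕ) (w : Fin N → ℕ) (W M : ℕ) (σ : LStrat N) (τ : FStrat N) : Prop :=
  FValid τ ∧ ∀ τ' : FStrat N, FValid τ' → EU2 N w W M σ τ' ≤ EU2 N w W M σ τ

section Helpers

variable {N : ℕ}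

lemma subEU1_eq (v : Fin N → ℕ) (σ : LStrat N) (τ : FStrat N) (i : Fin N) :
    subEU1 N v σ τ i = τ.s i * ((N : ℝ) * v i) := by
  unfold subEU1; ring

lemma subEU2_eq (w : Fin N → ℕ) (σ : LStrat N) (τ : FStrat N) (i : Fin N) :
    subEU2 N w σ τ i = -(((N : ℝ) * w i) * (σ.r i + (1 - σ.r i) * τ.s i)) := by
  unfold subEU2; ring

lemma EU1_eq (v : Fin N → ℕ) (σ : LStrat N) (τ : FStrat N) :
    EU1 N v σ τ = τ.g 0 * ∑ i, σ.q i * (τ.s i * ((N : ℝ) * v i)) := by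
  unfold EU1
  simp [subEU1_eq]

lemma EU2_eq (w : Fin N → ℕ) (W M : ℕ) (σ : LStrat N) (τ : FStrat N)
    (hq : (∑ i, σ.q i) = 1) :
    EU2 N w W M σ τ = τ.g 0 * (∑ i, σ.q i * subEU2 N w σ τ i)
      + ∑ k : Fin N, τ.g k.succ * (σ.q k * ((N:ℝ) * M) - W - M) := by
  unfold EU2
  congr 1
  apply Finset.sum_congr rfl
  intro k _
  congr 1
  have h : ∀ i : Fin N, σ.q i * (if i = k then (N : ℝ) * M - W - M else -(W:ℝ) - M)
      = σ.q i * (-(W:ℝ) - M) + (if i = k then σ.q i * ((N:ℝ)*M) else 0) := by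
    intro i; split <;> ring
  rw [Finset.sum_congr rfl (fun i _ => h i), Finset.sum_add_distrib,
    Finset.sum_ite_eq' Finset.univ k (fun i => σ.q i * ((N:ℝ)*M))]
  rw [← Finset.sum_mul, hq]
  simp
  ring

lemma FValid_pure (k : Fin (N+1)) (s : Fin N → ℝ) (hs : ∀ i, 0 ≤ s i ∧ s i ≤ 1) :
    FValid (⟨fun j => if j = k then 1 else 0, s⟩ : FStrat N) := by
  refine ⟨fun j => ?_, ?_, hs⟩
  · dsimp; split <;> norm_num
  · simp [Finset.sum_ite_eq']

lemma uniform_lower (N W M : ℕ) (hN : 0 < N) (w v : Fin N → ℕ)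
    (T : Finset (Fin N)) (hT : ((∑ i ∈ T, w i : ℕ) : ℝ) ≤ (W : ℝ)) :
    ∃ (σ' : LStrat N) (τ' : FStrat N), LValid σ' ∧ BestResponse N w W M σ' τ' ∧
      EU1 N v σ' τ' = ∑ i ∈ T, (v i : ℝ) := by
  classical
  have hNR : (0:ℝ) < (N:ℝ) := by exact_mod_cast hN
  have hT' : (∑ i ∈ T, (w i : ℝ)) ≤ (W : ℝ) := by push_cast at hT; exact hT
  set σ' : LStrat N := ⟨fun _ => 1 / (N:ℝ), fun i => if i ∈ T then 1 else 0⟩ with hσ'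
  set τ' : FStrat N := ⟨fun k => if k = 0 then 1 else 0, fun i => if i ∈ T then 1 else 0⟩
    with hτ'
  have hq1 : (∑ i, σ'.q i) = 1 := by
    simp [hσ', Finset.sum_const, Finset.card_univ, nsmul_eq_mul]
    field_simp
  have hs01 : ∀ i : Fin N, (0:ℝ) ≤ τ'.s i ∧ τ'.s i ≤ 1 := by
    intro i; simp only [hτ']; split <;> norm_num
  have hLV : LValid σ' := by
    refine ⟨fun i => by positivity, hq1, fun i => ?_⟩
    simp only [hσ']; split <;> norm_num
  have hFV : FValid τ' := FValid_pure 0 _ hs01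
  -- pointwise bound on subgame payoffs
  have hpt : ∀ (τ : FStrat N), (∀ i, 0 ≤ τ.s i ∧ τ.s i ≤ 1) → ∀ i : Fin N,
      σ'.q i * subEU2 N w σ' τ i ≤ (if i ∈ T then -(w i : ℝ) else 0) := by
    intro τ hs i
    rw [subEU2_eq]
    simp only [hσ']
    by_cases hi : i ∈ T
    · simp only [hi, if_true]
      rw [show ((1:ℝ) + (1-1) * τ.s i) = 1 by ring]
      rw [mul_one, mul_neg]
      field_simp; exact le_rfl
    · simp only [hi, if_false]
      rw [show ((0:ℝ) + (1-0) * τ.s i) = τ.s i by ring]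
      have h1 : (0:ℝ) ≤ (N:ℝ) * (w i : ℝ) * τ.s i := by
        have := (hs i).1; positivity
      have : (0:ℝ) ≤ 1 / (N:ℝ) := by positivity
      nlinarith
  have hsum' : (∑ i, σ'.q i * subEU2 N w σ' τ' i) = -∑ i ∈ T, (w i : ℝ) := by
    have : ∀ i : Fin N, σ'.q i * subEU2 N w σ' τ' i
        = (if i ∈ T then -(w i : ℝ) else 0) := by
      intro i
      rw [subEU2_eq]
      simp only [hσ', hτ']
      by_cases hi : i ∈ T
      · simp only [hi, if_true]
        rw [show ((1:ℝ) + (1-1) * 1) = 1 by ring, mul_one, mul_neg]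
        field_simp
      · simp only [hi, if_false]
        ring
    rw [Finset.sum_congr rfl (fun i _ => this i), Finset.sum_ite_mem,
      Finset.univ_inter, Finset.sum_neg_distrib]
  have hEU2τ' : EU2 N w W M σ' τ' = -∑ i ∈ T, (w i : ℝ) := by
    rw [EU2_eq w W M σ' τ' hq1, hsum']
    have hg0 : τ'.g 0 = 1 := by simp [hτ']
    have hgk : ∀ k : Fin N, τ'.g k.succ = 0 := by
      intro k; simp [hτ', Fin.succ_ne_zero]
    rw [hg0, one_mul]
    have : (∑ k : Fin N, τ'.g k.succ * (σ'.q k * ((N:ℝ) * M) - W - M)) = 0 := by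
      apply Finset.sum_eq_zero
      intro k _
      rw [hgk k, zero_mul]
    rw [this, add_zero]
  refine ⟨σ', τ', hLV, ⟨hFV, ?_⟩, ?_⟩
  · intro τ hτ
    obtain ⟨hg0, hg1, hs⟩ := hτ
    rw [EU2_eq w W M σ' τ hq1, hEU2τ']
    have hsg : (∑ k : Fin N, τ.g k.succ) = 1 - τ.g 0 := by
      rw [Fin.sum_univ_succ] at hg1; linarith
    have h1 : (∑ i, σ'.q i * subEU2 N w σ' τ i) ≤ -∑ i ∈ T, (w i : ℝ) := by
      calc (∑ i, σ'.q i * subEU2 N w σ' τ i)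
          ≤ ∑ i : Fin N, (if i ∈ T then -(w i : ℝ) else 0) :=
            Finset.sum_le_sum (fun i _ => hpt τ hs i)
        _ = -∑ i ∈ T, (w i : ℝ) := by
            rw [Finset.sum_ite_mem, Finset.univ_inter, Finset.sum_neg_distrib]
    have h2 : ∀ k : Fin N, σ'.q k * ((N:ℝ) * M) - W - M = -(W:ℝ) := by
      intro k; simp only [hσ']; field_simp; ring
    calc τ.g 0 * (∑ i, σ'.q i * subEU2 N w σ' τ i)
          + ∑ k : Fin N, τ.g k.succ * (σ'.q k * ((N:ℝ) * M) - W - M)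
        ≤ τ.g 0 * (-∑ i ∈ T, (w i : ℝ))
          + ∑ k : Fin N, τ.g k.succ * (-∑ i ∈ T, (w i : ℝ)) := by
          apply add_le_add
          · exact mul_le_mul_of_nonneg_left h1 (hg0 0)
          · apply Finset.sum_le_sum
            intro k _
            rw [h2 k]
            have hW : -(W:ℝ) ≤ -∑ i ∈ T, (w i : ℝ) := by linarith [hT']
            exact mul_le_mul_of_nonneg_left hW (hg0 _)
      _ = (τ.g 0 + ∑ k : Fin N, τ.g k.succ) * (-∑ i ∈ T, (w i : ℝ)) := by
          rw [← Finset.sum_mul]; ring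
      _ = -∑ i ∈ T, (w i : ℝ) := by rw [hsg]; ring
  · rw [EU1_eq]
    have hg0 : τ'.g 0 = 1 := by simp [hτ']
    rw [hg0, one_mul]
    have : ∀ i : Fin N, σ'.q i * (τ'.s i * ((N:ℝ) * v i))
        = (if i ∈ T then (v i : ℝ) else 0) := by
      intro i; simp only [hσ', hτ']
      by_cases hi : i ∈ T
      · simp only [hi, if_true]; field_simp
      · simp only [hi, if_false]; ring
    rw [Finset.sum_congr rfl (fun i _ => this i), Finset.sum_ite_mem, Finset.univ_inter]

end Helpers

set_option maxHeartbeats 2000000 in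
/-- For a Knapsack instance with unit-items, if a leader behavioral
strategy `σ` playing a pure action in every subgame `I_i` is optimal — i.e. its Stackelberg
payoff `x` equals the leader's Stackelberg value of the game in behavioral strategies — and
`x` is strictly positive, then `σ` plays the uniform distribution over `l_1,…,l_N`
at the root. -/
theorem optimal_pure_subgame_strategy_is_uniform_at_root
    (N W M : ℕ) (hN : 0 < N) (w v : Fin N → ℕ)
    (hw : ∀ i, 0 < w i) (hv : ∀ i, 0 < v i)
    (hunit : W ≤ (Finset.univ.filter fun i => w i = 1 ∧ v i = 1).card)
    (hM : IsLeast {m : ℕ | ∀ i, W * N * v i < m ∧ N * w i < m} M)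
    (σ : LStrat N) (hσ : LValid σ) (hpure : ∀ i, σ.r i = 0 ∨ σ.r i = 1)
    (x : ℝ)
    (hpayoff : IsGreatest
      {y : ℝ | ∃ τ : FStrat N, BestResponse N w W M σ τ ∧ y = EU1 N v σ τ} x)
    (hopt : IsGreatest
      {y : ℝ | ∃ (σ' : LStrat N) (τ : FStrat N),
        LValid σ' ∧ BestResponse N w W M σ' τ ∧ y = EU1 N v σ' τ} x)
    (hpos : 0 < x) :
    ∀ i, σ.q i = 1 / (N : ℝ) := by
  classical
  obtain ⟨hq0, hq1, hr01⟩ := hσ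
  have hNR : (0:ℝ) < (N:ℝ) := by exact_mod_cast hN
  set i0 : Fin N := ⟨0, hN⟩ with hi0
  have hMv : ∀ i, (W:ℝ) * N * v i < M := by
    intro i; exact_mod_cast (hM.1 i).1
  have hMw : ∀ i, (N:ℝ) * w i < M := by
    intro i; exact_mod_cast (hM.1 i).2
  have hv1 : ∀ i, (1:ℝ) ≤ (v i : ℝ) := by
    intro i; exact_mod_cast hv i
  have hw1 : ∀ i, (1:ℝ) ≤ (w i : ℝ) := by
    intro i; exact_mod_cast hw i
  have hMpos : (0:ℝ) < M := by
    have := hMw i0; nlinarith [hw1 i0, hNR]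
  obtain ⟨k, -, hmax'⟩ := Finset.exists_max_image Finset.univ σ.q ⟨i0, Finset.mem_univ i0⟩
  have hmax : ∀ i, σ.q i ≤ σ.q k := fun i => hmax' i (Finset.mem_univ i)
  have hkmax : σ.q k ≤ 1 / (N:ℝ) := by
    by_contra hk
    push_neg at hk
    set δ : ℝ := (N:ℝ) * σ.q k - 1 with hδdef
    have hδpos : 0 < δ := by
      rw [hδdef]
      have := (div_lt_iff₀ hNR).mp hk
      nlinarith
    -- extract the best response achieving x
    obtain ⟨⟨τ, ⟨⟨hg0, hg1, hs01⟩, hBRle⟩, hx⟩, -⟩ := hpayoff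
    have hEU1 : x = τ.g 0 * ∑ i, σ.q i * (τ.s i * ((N : ℝ) * v i)) := by
      rw [hx, EU1_eq]
    have hg0pos : 0 < τ.g 0 := by
      rcases (hg0 0).lt_or_eq with h | h
      · exact h
      · rw [← h, zero_mul] at hEU1; linarith [hpos, hEU1.le]
    have hg0le1 : τ.g 0 ≤ 1 := by
      rw [Fin.sum_univ_succ] at hg1
      have hnn : 0 ≤ ∑ j : Fin N, τ.g j.succ :=
        Finset.sum_nonneg fun j _ => hg0 _
      linarith
    -- pure root deviations of the follower
    have hEj : ∀ j : Fin N,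
        σ.q j * ((N:ℝ) * M) - W - M ≤ EU2 N w W M σ τ := by
      intro j
      have hval : EU2 N w W M σ ⟨fun t => if t = j.succ then 1 else 0, τ.s⟩
          = σ.q j * ((N:ℝ) * M) - W - M := by
        rw [EU2_eq w W M σ _ hq1]
        have h1 : ((⟨fun t => if t = j.succ then 1 else 0, τ.s⟩ : FStrat N).g 0) = 0 := by
          simp [Ne.symm (Fin.succ_ne_zero j)]
        rw [h1, zero_mul, zero_add]
        have h2 : ∀ t : Fin N,
            ((⟨fun t => if t = j.succ then 1 else 0, τ.s⟩ : FStrat N).g t.succ)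
            = if t = j then (1:ℝ) else 0 := by
          intro t; simp [Fin.succ_inj]
        simp only [h2, ite_mul, one_mul, zero_mul]
        simp [Finset.sum_ite_eq']
      rw [← hval]
      exact hBRle _ (FValid_pure j.succ τ.s hs01)
    -- the follower's expected utility equals the f₀-branch value
    have hE2A : EU2 N w W M σ τ ≤ ∑ i, σ.q i * subEU2 N w σ τ i := by
      have hdec := EU2_eq w W M σ τ hq1
      have hsum_le : (∑ j : Fin N, τ.g j.succ * (σ.q j * ((N:ℝ) * M) - W - M))
          ≤ (∑ j : Fin N, τ.g j.succ) * EU2 N w W M σ τ := by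
        rw [Finset.sum_mul]
        exact Finset.sum_le_sum fun j _ => mul_le_mul_of_nonneg_left (hEj j) (hg0 _)
      have hsg : (∑ j : Fin N, τ.g j.succ) = 1 - τ.g 0 := by
        rw [Fin.sum_univ_succ] at hg1; linarith
      rw [hsg] at hsum_le
      by_contra hcon
      push_neg at hcon
      have h3 := mul_lt_mul_of_pos_left hcon hg0pos
      nlinarith
    -- the set of subgames where the leader plays ⊕
    set S : Finset (Fin N) := Finset.univ.filter (fun i => σ.r i = 1) with hSdef
    set Qw : ℝ := ∑ i ∈ S, σ.q i * ((N:ℝ) * w i) with hQw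
    set Qv : ℝ := ∑ i ∈ S, σ.q i * ((N:ℝ) * v i) with hQv
    have hAle : (∑ i, σ.q i * subEU2 N w σ τ i) ≤ -Qw := by
      have hp : ∀ i ∈ Finset.univ, σ.q i * subEU2 N w σ τ i
          ≤ (if σ.r i = 1 then -(σ.q i * ((N:ℝ) * w i)) else 0) := by
        intro i _
        rw [subEU2_eq]
        rcases hpure i with h0 | h1
        · rw [if_neg (by rw [h0]; norm_num), h0]
          have hNw : (0:ℝ) ≤ (N:ℝ) * w i := by positivity
          have h3 : (0:ℝ) ≤ σ.q i * ((N:ℝ) * w i) * τ.s i :=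
            mul_nonneg (mul_nonneg (hq0 i) hNw) (hs01 i).1
          nlinarith [h3]
        · rw [if_pos h1, h1]
          apply le_of_eq; ring
      calc (∑ i, σ.q i * subEU2 N w σ τ i)
          ≤ ∑ i, (if σ.r i = 1 then -(σ.q i * ((N:ℝ) * w i)) else 0) :=
            Finset.sum_le_sum hp
        _ = ∑ i ∈ S, -(σ.q i * ((N:ℝ) * w i)) := (Finset.sum_filter _ _).symm
        _ = -Qw := by rw [hQw, ← Finset.sum_neg_distrib]
    have hQw0 : 0 ≤ Qw := by
      rw [hQw]
      apply Finset.sum_nonneg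
      intro i _
      have : (0:ℝ) ≤ (N:ℝ) * w i := by positivity
      exact mul_nonneg (hq0 i) this
    have hC1 : Qw ≤ (W:ℝ) - M * δ := by
      have h := hEj k
      rw [hδdef]
      nlinarith [hE2A, hAle]
    have hMδ : M * δ ≤ W := by linarith
    have hWpos : (0:ℝ) < W := by nlinarith [mul_pos hMpos hδpos]
    have hδv : ∀ i, δ * ((N:ℝ) * v i) < 1 := by
      intro i
      have h1 : δ * ((W:ℝ) * N * v i) < δ * M :=
        mul_lt_mul_of_pos_left (hMv i) hδpos
      nlinarith [hWpos]
    have hδN : δ * (N:ℝ) < 1 := by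
      have h1 := hδv i0
      have h2 : (0:ℝ) ≤ δ * (N:ℝ) := mul_nonneg hδpos.le hNR.le
      nlinarith [hv1 i0, h1, h2]
    -- lower bound on each N * q i
    have hqlow : ∀ i : Fin N, 1 - ((N:ℝ) - 1) * δ ≤ (N:ℝ) * σ.q i := by
      intro i
      have hsum : (∑ j ∈ Finset.univ.erase i, σ.q j) = 1 - σ.q i := by
        rw [Finset.sum_erase_eq_sub (Finset.mem_univ i), hq1]
      have hb : (∑ j ∈ Finset.univ.erase i, σ.q j) ≤ ((N:ℝ) - 1) * σ.q k := by
        have hcard := Finset.sum_le_card_nsmul (Finset.univ.erase i) σ.q (σ.q k)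
          (fun j _ => hmax j)
        rw [Finset.card_erase_of_mem (Finset.mem_univ i), Finset.card_univ,
          Fintype.card_fin, nsmul_eq_mul, Nat.cast_sub hN, Nat.cast_one] at hcard
        exact hcard
      have h5 : (N:ℝ) * (1 - σ.q i) ≤ (N:ℝ) * (((N:ℝ) - 1) * σ.q k) :=
        mul_le_mul_of_nonneg_left (by linarith) hNR.le
      have h6 : (N:ℝ) * σ.q k = 1 + δ := by rw [hδdef]; ring
      nlinarith [h5, h6]
    -- the total weight of S is at most W - 1
    set Sw : ℕ := ∑ i ∈ S, w i with hSwdef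
    have hSwQw : ((1:ℝ) - ((N:ℝ) - 1) * δ) * (Sw:ℝ) ≤ Qw := by
      have hterm : ∀ i ∈ S, ((1:ℝ) - ((N:ℝ) - 1) * δ) * (w i:ℝ) ≤ σ.q i * ((N:ℝ) * w i) := by
        intro i _
        have hwnn : (0:ℝ) ≤ (w i : ℝ) := by positivity
        have := mul_le_mul_of_nonneg_right (hqlow i) hwnn
        nlinarith
      calc ((1:ℝ) - ((N:ℝ) - 1) * δ) * (Sw:ℝ)
          = ∑ i ∈ S, ((1:ℝ) - ((N:ℝ) - 1) * δ) * (w i:ℝ) := by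
            have hc : (Sw:ℝ) = ∑ i ∈ S, (w i:ℝ) := by rw [hSwdef]; push_cast; ring
            rw [hc, Finset.mul_sum]
        _ ≤ Qw := Finset.sum_le_sum hterm
    have hSwlt : Sw < W := by
      by_contra hcon
      push_neg at hcon
      have hWSw : (W:ℝ) ≤ (Sw:ℝ) := by exact_mod_cast hcon
      have hfac : (0:ℝ) ≤ 1 - ((N:ℝ) - 1) * δ := by nlinarith [hδpos.le]
      have h7 : ((1:ℝ) - ((N:ℝ) - 1) * δ) * (W:ℝ) ≤ ((1:ℝ) - ((N:ℝ) - 1) * δ) * (Sw:ℝ) :=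
        mul_le_mul_of_nonneg_left hWSw hfac
      have hMWN : (W:ℝ) * N < M := by nlinarith [hMv i0, hv1 i0, hWpos, hNR]
      nlinarith [hSwQw, hC1, hδpos, hWpos]
    -- a unit item outside S exists
    have hexu : ∃ u : Fin N, (w u = 1 ∧ v u = 1) ∧ u ∉ S := by
      by_contra hcon
      push_neg at hcon
      have hsub : (Finset.univ.filter fun i => w i = 1 ∧ v i = 1) ⊆ S := by
        intro u hu
        exact hcon u (Finset.mem_filter.mp hu).2
      have h1 : (Finset.univ.filter fun i => w i = 1 ∧ v i = 1).card ≤ Sw := by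
        have he : (Finset.univ.filter fun i => w i = 1 ∧ v i = 1).card
            = ∑ i ∈ (Finset.univ.filter fun i => w i = 1 ∧ v i = 1), w i := by
          rw [Finset.card_eq_sum_ones]
          apply Finset.sum_congr rfl
          intro i hi
          have := (Finset.mem_filter.mp hi).2.1
          omega
        rw [he, hSwdef]
        exact Finset.sum_le_sum_of_subset hsub
      omega
    obtain ⟨u, ⟨hwu, hvu⟩, huS⟩ := hexu
    -- the improved uniform strategy
    have hTw : ((∑ i ∈ insert u S, w i : ℕ) : ℝ) ≤ (W:ℝ) := by
      rw [Finset.sum_insert huS, hwu]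
      have : 1 + Sw ≤ W := by omega
      exact_mod_cast this
    obtain ⟨σ2, τ2, hLV2, hBR2, hEU12⟩ := uniform_lower N W M hN w v (insert u S) hTw
    have hxge : (∑ i ∈ insert u S, (v i : ℝ)) ≤ x :=
      hopt.2 ⟨σ2, τ2, hLV2, hBR2, hEU12.symm⟩
    have hxge' : 1 + (∑ i ∈ S, (v i : ℝ)) ≤ x := by
      rw [Finset.sum_insert huS, hvu] at hxge
      exact_mod_cast hxge
    -- q i * s i vanishes outside S
    have hqs : ∀ i : Fin N, σ.r i = 0 → σ.q i * τ.s i = 0 := by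
      intro i hri
      set τ3 : FStrat N := ⟨τ.g, fun j => if σ.r j = 1 then τ.s j else 0⟩ with hτ3
      have hFV3 : FValid τ3 := by
        refine ⟨hg0, hg1, fun j => ?_⟩
        simp only [hτ3]; split
        · exact hs01 j
        · norm_num
      have hle3 := hBRle τ3 hFV3
      have hrwτ : EU2 N w W M σ τ = τ.g 0 * (∑ i, σ.q i * subEU2 N w σ τ i) +
          ∑ k' : Fin N, τ.g k'.succ *
            (∑ i, σ.q i *
              (if i = k' then (N : ℝ) * M - W - M else -(W:ℝ) - M)) := rfl
      have hrwτ3 : EU2 N w W M σ τ3 = τ.g 0 * (∑ i, σ.q i * subEU2 N w σ τ3 i) +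
          ∑ k' : Fin N, τ.g k'.succ *
            (∑ i, σ.q i *
              (if i = k' then (N : ℝ) * M - W - M else -(W:ℝ) - M)) := rfl
      rw [hrwτ, hrwτ3] at hle3
      have hA3A : (∑ i, σ.q i * subEU2 N w σ τ3 i) ≤ ∑ i, σ.q i * subEU2 N w σ τ i :=
        le_of_mul_le_mul_left (by linarith) hg0pos
      have hpt' : ∀ i ∈ Finset.univ,
          σ.q i * subEU2 N w σ τ i ≤ σ.q i * subEU2 N w σ τ3 i := by
        intro j _
        rw [subEU2_eq, subEU2_eq]
        simp only [hτ3]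
        rcases hpure j with h0 | h1
        · rw [h0]; norm_num
          have hNw : (0:ℝ) ≤ (N:ℝ) * w j := by positivity
          nlinarith [mul_nonneg (hq0 j) (mul_nonneg hNw (hs01 j).1)]
        · rw [h1]; norm_num
      have hAsum : (∑ i, σ.q i * subEU2 N w σ τ i) = ∑ i, σ.q i * subEU2 N w σ τ3 i :=
        le_antisymm (Finset.sum_le_sum hpt') hA3A
      have heq := (Finset.sum_eq_sum_iff_of_le hpt').mp hAsum i (Finset.mem_univ i)
      rw [subEU2_eq, subEU2_eq] at heq
      simp only [hτ3] at heq
      rw [hri] at heq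
      norm_num at heq
      -- heq should give q i * ((N * w i) * s i) = 0 in some form
      rcases heq with h | h | h
      · rw [h, zero_mul]
      · exfalso
        rcases h with h | h
        · exact hN.ne' h
        · exact (hw i).ne' h
      · rw [h, mul_zero]
    -- x is at most Qv
    have hSnn : (0:ℝ) ≤ ∑ i, σ.q i * (τ.s i * ((N:ℝ) * v i)) := by
      apply Finset.sum_nonneg
      intro i _
      have : (0:ℝ) ≤ (N:ℝ) * v i := by positivity
      exact mul_nonneg (hq0 i) (mul_nonneg (hs01 i).1 this)
    have hS1 : (∑ i, σ.q i * (τ.s i * ((N:ℝ) * v i))) ≤ Qv := by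
      calc (∑ i, σ.q i * (τ.s i * ((N:ℝ) * v i)))
          ≤ ∑ i, (if σ.r i = 1 then σ.q i * ((N:ℝ) * v i) else 0) := by
            apply Finset.sum_le_sum
            intro i _
            rcases hpure i with h0 | h1
            · rw [if_neg (by rw [h0]; norm_num)]
              have h2 : σ.q i * (τ.s i * ((N:ℝ) * v i))
                  = (σ.q i * τ.s i) * ((N:ℝ) * v i) := by ring
              rw [h2, hqs i h0, zero_mul]
            · rw [if_pos h1]
              have h2 : (0:ℝ) ≤ σ.q i * ((N:ℝ) * v i) :=
                mul_nonneg (hq0 i) (by positivity)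
              nlinarith [(hs01 i).2, (hs01 i).1, hq0 i]
        _ = Qv := by rw [hQv]; exact (Finset.sum_filter _ _).symm
    have hxQv : x ≤ Qv := by
      rw [hEU1]
      calc τ.g 0 * (∑ i, σ.q i * (τ.s i * ((N:ℝ) * v i)))
          ≤ 1 * (∑ i, σ.q i * (τ.s i * ((N:ℝ) * v i))) :=
            mul_le_mul_of_nonneg_right hg0le1 hSnn
        _ ≤ Qv := by rw [one_mul]; exact hS1
    -- final contradiction
    have hQvle : Qv ≤ (∑ i ∈ S, (v i : ℝ)) + ∑ i ∈ S, δ * (v i : ℝ) := by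
      rw [hQv, ← Finset.sum_add_distrib]
      apply Finset.sum_le_sum
      intro i _
      have h1 : (N:ℝ) * σ.q i ≤ 1 + δ := by
        have := hmax i
        have h6 : (N:ℝ) * σ.q k = 1 + δ := by rw [hδdef]; ring
        nlinarith [hNR]
      have hvnn : (0:ℝ) ≤ (v i : ℝ) := by positivity
      nlinarith [mul_le_mul_of_nonneg_right h1 hvnn]
    have hδsum : (∑ i ∈ S, δ * (v i : ℝ)) < 1 := by
      rcases S.eq_empty_or_nonempty with hSe | hSne
      · rw [hSe]; simp
      · have hlt : (∑ i ∈ S, δ * (v i : ℝ)) < ∑ i ∈ S, 1 / (N:ℝ) := by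
          apply Finset.sum_lt_sum_of_nonempty hSne
          intro i _
          rw [lt_div_iff₀ hNR]
          have := hδv i
          nlinarith
        have hcard : (S.card : ℝ) ≤ (N:ℝ) := by
          have : S.card ≤ N := by
            have := Finset.card_le_univ S
            simpa using this
          exact_mod_cast this
        have hsc : (∑ i ∈ S, (1:ℝ) / (N:ℝ)) = (S.card : ℝ) / N := by
          rw [Finset.sum_const, nsmul_eq_mul]; ring
        rw [hsc] at hlt
        have : (S.card : ℝ) / N ≤ 1 := by
          rw [div_le_one hNR]; exact hcard
        linarith
    linarith [hxge', hxQv, hQvle, hδsum]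
  -- conclude: all coordinates equal 1/N
  have hub : ∀ i, σ.q i ≤ 1 / (N:ℝ) := fun i => (hmax i).trans hkmax
  intro i
  by_contra hne
  have hlt : σ.q i < 1 / (N:ℝ) := lt_of_le_of_ne (hub i) hne
  have hsumlt : (∑ j, σ.q j) < ∑ _j : Fin N, 1 / (N:ℝ) :=
    Finset.sum_lt_sum (fun j _ => hub j) ⟨i, Finset.mem_univ i, hlt⟩
  rw [hq1, Finset.sum_const, Finset.card_univ, Fintype.card_fin, nsmul_eq_mul,
    mul_one_div, div_self hNR.ne'] at hsumlt
  exact lt_irrefl _ hsumlt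


end KnapsackGame
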